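/- Let F be a twice differentiable real-valued function on [a, b] with |F''(x)| ≥ r > 0 for all x ∈ [a, b]. Then |∫_a^b e^{iF(x)} dx| ≤ 8/r^{1/2}. -/

import Mathlib

open Complex intervalIntegral Set MeasureTheory

/-- First derivative test on a subinterval where `F'` has one sign and `|F'| ≥ lam`,
assuming `F'' > 0`. -/
lemma vdc1 (F F' F'' : ℝ → ℝ) (c d lam : ℝ) (hcd : c ≤ d) (hlam : 0 < lam)
    (hd : ∀ x ∈ Icc c d, HasDerivAt F (F' x) x)
    (hd' : ∀ x ∈ Icc c d, HasDerivAt F' (F'' x) x)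
    (hpos : ∀ x ∈ Icc c d, 0 < F'' x)
    (hsign : (∀ x ∈ Icc c d, lam ≤ F' x) ∨ (∀ x ∈ Icc c d, F' x ≤ -lam)) :
    ‖∫ x in c..d, Complex.exp (I * (F x : ℂ))‖ ≤ 3 / lam := by
  have huIcc : uIcc c d = Icc c d := uIcc_of_le hcd
  have habs : ∀ x ∈ Icc c d, lam ≤ |F' x| := by
    intro x hx
    rcases hsign with h | h
    · exact le_trans (h x hx) (le_abs_self _)
    · calc lam ≤ -(F' x) := by linarith [h x hx]
        _ ≤ |F' x| := neg_le_abs _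
  have hne : ∀ x ∈ Icc c d, F' x ≠ 0 := by
    intro x hx h0
    have := habs x hx
    rw [h0] at this; simp at this; linarith
  have hcne : ∀ x ∈ Icc c d, (I * (F' x : ℂ)) ≠ 0 := by
    intro x hx
    simp [Complex.ext_iff, I_ne_zero, hne x hx]
  have contF' : ContinuousOn F' (Icc c d) := fun x hx => (hd' x hx).continuousAt.continuousWithinAt
  -- derivative facts
  have hv : ∀ x ∈ Icc c d, HasDerivAt (fun y => Complex.exp (I * (F y : ℂ)))
      (I * F' x * Complex.exp (I * (F x : ℂ))) x := by
    intro x hx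
    have h1 : HasDerivAt (fun y => I * (F y : ℂ)) (I * F' x) x :=
      ((hd x hx).ofReal_comp).const_mul I
    simpa [mul_comm] using h1.cexp
  have hu : ∀ x ∈ Icc c d, HasDerivAt (fun y => (I * (F' y : ℂ))⁻¹)
      (-(I * F'' x) / (I * F' x) ^ 2) x := by
    intro x hx
    have h1 : HasDerivAt (fun y => I * (F' y : ℂ)) (I * F'' x) x :=
      ((hd' x hx).ofReal_comp).const_mul I
    have h2 := (hasDerivAt_inv (hcne x hx)).comp x h1
    exact h2.congr_deriv (by ring)
  -- integrability of F''
  have hF''int : IntervalIntegrable F'' volume c d := by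
    apply intervalIntegrable_deriv_of_nonneg (g := F')
    · rw [huIcc]; exact contF'
    · intro x hx
      rw [min_eq_left hcd, max_eq_right hcd] at hx
      exact hd' x (Ioo_subset_Icc_self hx)
    · intro x hx
      rw [min_eq_left hcd, max_eq_right hcd] at hx
      exact (hpos x (Ioo_subset_Icc_self hx)).le
  have hF''intC : IntervalIntegrable (fun x => (F'' x : ℂ)) volume c d :=
    ⟨hF''int.1.ofReal, hF''int.2.ofReal⟩
  have contF : ContinuousOn F (Icc c d) := fun x hx => (hd x hx).continuousAt.continuousWithinAt
  have contF'C : ContinuousOn (fun x => I * (F' x : ℂ)) (Icc c d) :=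
    continuousOn_const.mul (Complex.continuous_ofReal.comp_continuousOn contF')
  have contv : ContinuousOn (fun x => Complex.exp (I * (F x : ℂ))) (Icc c d) :=
    Complex.continuous_exp.comp_continuousOn
      (continuousOn_const.mul (Complex.continuous_ofReal.comp_continuousOn contF))
  have hu'int : IntervalIntegrable (fun x => -(I * (F'' x : ℂ)) / (I * F' x) ^ 2) volume c d := by
    have heq : (fun x => -(I * (F'' x : ℂ)) / (I * F' x) ^ 2)
        = fun x => (F'' x : ℂ) * (-I / (I * F' x) ^ 2) := by
      funext x; ring
    rw [heq]
    apply hF''intC.mul_continuousOn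
    rw [huIcc]
    exact continuousOn_const.div (contF'C.pow 2)
      (fun x hx => pow_ne_zero 2 (hcne x hx))
  have hv'int : IntervalIntegrable (fun x => I * F' x * Complex.exp (I * (F x : ℂ))) volume c d := by
    apply ContinuousOn.intervalIntegrable
    rw [huIcc]
    exact contF'C.mul contv
  have ibp := intervalIntegral.integral_mul_deriv_eq_deriv_mul
    (u := fun x => (I * (F' x : ℂ))⁻¹) (v := fun x => Complex.exp (I * (F x : ℂ)))
    (u' := fun x => -(I * (F'' x : ℂ)) / (I * F' x) ^ 2)
    (v' := fun x => I * F' x * Complex.exp (I * (F x : ℂ)))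
    (fun x hx => hu x (huIcc ▸ hx)) (fun x hx => hv x (huIcc ▸ hx)) hu'int hv'int
  have hmain : (∫ x in c..d, Complex.exp (I * (F x : ℂ)))
      = (I * (F' d : ℂ))⁻¹ * Complex.exp (I * (F d : ℂ))
        - (I * (F' c : ℂ))⁻¹ * Complex.exp (I * (F c : ℂ))
        - ∫ x in c..d, (-(I * (F'' x : ℂ)) / (I * F' x) ^ 2) * Complex.exp (I * (F x : ℂ)) := by
    rw [← ibp]
    apply intervalIntegral.integral_congr
    intro x hx
    rw [huIcc] at hx
    simp only
    rw [← mul_assoc, inv_mul_cancel₀ (hcne x hx), one_mul]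
  -- norms
  have hnormexp : ∀ t : ℝ, ‖Complex.exp (I * (t : ℂ))‖ = 1 := by
    intro t
    rw [Complex.norm_exp]
    simp
  have hnormu : ∀ x ∈ Icc c d, ‖(I * (F' x : ℂ))⁻¹‖ ≤ lam⁻¹ := by
    intro x hx
    rw [norm_inv, norm_mul, Complex.norm_I, one_mul, Complex.norm_real, Real.norm_eq_abs]
    exact inv_anti₀ hlam (habs x hx)
  have cmem : c ∈ Icc c d := left_mem_Icc.2 hcd
  have dmem : d ∈ Icc c d := right_mem_Icc.2 hcd
  -- the integral of the norm of u' * v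
  have hnormint : (∫ x in c..d, ‖(-(I * (F'' x : ℂ)) / (I * F' x) ^ 2) * Complex.exp (I * (F x : ℂ))‖)
      ≤ lam⁻¹ := by
    have heq : ∀ x ∈ Icc c d, ‖(-(I * (F'' x : ℂ)) / (I * F' x) ^ 2) * Complex.exp (I * (F x : ℂ))‖
        = F'' x / F' x ^ 2 := by
      intro x hx
      rw [norm_mul, hnormexp, mul_one, norm_div, norm_neg, norm_pow, norm_mul, norm_mul,
        Complex.norm_I, one_mul, one_mul, Complex.norm_real, Complex.norm_real,
        Real.norm_eq_abs, Real.norm_eq_abs, _root_.sq_abs, abs_of_pos (hpos x hx)]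
    have hder : ∀ x ∈ uIcc c d, HasDerivAt (fun y => -(F' y)⁻¹) (F'' x / F' x ^ 2) x := by
      intro x hx
      rw [huIcc] at hx
      have := ((hd' x hx).inv (hne x hx)).neg
      exact this.congr_deriv (by ring)
    have hint2 : IntervalIntegrable (fun x => F'' x / F' x ^ 2) volume c d := by
      apply intervalIntegrable_deriv_of_nonneg (g := fun y => -(F' y)⁻¹)
      · rw [huIcc]; exact (contF'.inv₀ hne).neg
      · intro x hx
        rw [min_eq_left hcd, max_eq_right hcd] at hx
        exact hder x (huIcc ▸ Ioo_subset_Icc_self hx)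
      · intro x hx
        rw [min_eq_left hcd, max_eq_right hcd] at hx
        exact div_nonneg (hpos x (Ioo_subset_Icc_self hx)).le (sq_nonneg _)
    have hval : (∫ x in c..d, F'' x / F' x ^ 2) = (F' c)⁻¹ - (F' d)⁻¹ := by
      rw [intervalIntegral.integral_eq_sub_of_hasDerivAt hder hint2]
      ring
    calc (∫ x in c..d, ‖(-(I * (F'' x : ℂ)) / (I * F' x) ^ 2) * Complex.exp (I * (F x : ℂ))‖)
        = ∫ x in c..d, F'' x / F' x ^ 2 := by
          apply intervalIntegral.integral_congr
          intro x hx; exact heq x (huIcc ▸ hx)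
      _ = (F' c)⁻¹ - (F' d)⁻¹ := hval
      _ ≤ lam⁻¹ := by
          rcases hsign with h | h
          · have h1 : (F' c)⁻¹ ≤ lam⁻¹ := inv_anti₀ hlam (h c cmem)
            have h2 : 0 < (F' d)⁻¹ := inv_pos.2 (lt_of_lt_of_le hlam (h d dmem))
            linarith
          · have h1 : (F' c)⁻¹ < 0 := inv_neg''.2 (by linarith [h c cmem])
            have h2 : (-(F' d))⁻¹ ≤ lam⁻¹ := inv_anti₀ hlam (by linarith [h d dmem])
            rw [inv_neg] at h2
            linarith
  calc ‖∫ x in c..d, Complex.exp (I * (F x : ℂ))‖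
      ≤ ‖(I * (F' d : ℂ))⁻¹ * Complex.exp (I * (F d : ℂ))‖
        + ‖(I * (F' c : ℂ))⁻¹ * Complex.exp (I * (F c : ℂ))‖
        + ‖∫ x in c..d, (-(I * (F'' x : ℂ)) / (I * F' x) ^ 2) * Complex.exp (I * (F x : ℂ))‖ := by
        rw [hmain]
        exact (norm_sub_le _ _).trans (by gcongr; exact norm_sub_le _ _)
    _ ≤ lam⁻¹ + lam⁻¹ + lam⁻¹ := by
        gcongr
        · rw [norm_mul, hnormexp, mul_one]; exact hnormu d dmem
        · rw [norm_mul, hnormexp, mul_one]; exact hnormu c cmem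
        · exact (intervalIntegral.norm_integral_le_integral_norm hcd).trans hnormint
    _ = 3 / lam := by rw [div_eq_mul_inv]; ring

/-- Second derivative test in the case `F'' ≥ r` on `[a,b]`. -/
lemma vdc2 (F F' F'' : ℝ → ℝ) (a b r : ℝ) (hab : a ≤ b) (hr : 0 < r)
    (hd : ∀ x ∈ Icc a b, HasDerivAt F (F' x) x)
    (hd' : ∀ x ∈ Icc a b, HasDerivAt F' (F'' x) x)
    (hbd : ∀ x ∈ Icc a b, r ≤ F'' x) :
    ‖∫ x in a..b, Complex.exp (I * (F x : ℂ))‖ ≤ 8 / Real.sqrt r := by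
  have hsr : 0 < Real.sqrt r := Real.sqrt_pos.2 hr
  set δ : ℝ := (Real.sqrt r)⁻¹ with hδdef
  have hδ : 0 < δ := inv_pos.2 hsr
  have hrδ : r * δ = Real.sqrt r := by
    rw [hδdef, ← div_eq_mul_inv, Real.div_sqrt]
  have contF' : ContinuousOn F' (Icc a b) := fun x hx => (hd' x hx).continuousAt.continuousWithinAt
  -- quantitative monotonicity of F'
  have key : ∀ x ∈ Icc a b, ∀ y ∈ Icc a b, x ≤ y → r * (y - x) ≤ F' y - F' x := by
    have := (convex_Icc a b).mul_sub_le_image_sub_of_le_deriv (f := F') contF'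
      (fun x hx => ((hd' x (interior_subset hx)).differentiableAt).differentiableWithinAt)
      (C := r) (fun x hx => by
        rw [(hd' x (interior_subset hx)).deriv]
        exact hbd x (interior_subset hx))
    exact this
  -- choose the splitting point c
  obtain ⟨c, hc, hcL, hcR⟩ : ∃ c ∈ Icc a b,
      (a ≤ c - δ → F' (c - δ) ≤ -Real.sqrt r) ∧ (c + δ ≤ b → Real.sqrt r ≤ F' (c + δ)) := by
    rcases le_or_gt 0 (F' a) with h | h
    · refine ⟨a, left_mem_Icc.2 hab, fun hle => absurd hle (by linarith), fun hle => ?_⟩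
      have := key a (left_mem_Icc.2 hab) (a + δ) ⟨by linarith, hle⟩ (by linarith)
      have : r * δ ≤ F' (a + δ) - F' a := by simpa using this
      linarith [hrδ]
    · rcases le_or_gt (F' b) 0 with h' | h'
      · refine ⟨b, right_mem_Icc.2 hab, fun hle => ?_, fun hle => absurd hle (by linarith)⟩
        have := key (b - δ) ⟨hle, by linarith⟩ b (right_mem_Icc.2 hab) (by linarith)
        have : r * δ ≤ F' b - F' (b - δ) := by simpa using this
        linarith [hrδ]
      · obtain ⟨c, hc, hc0⟩ := intermediate_value_Icc hab contF' (Set.mem_Icc.2 ⟨h.le, h'.le⟩)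
        refine ⟨c, hc, fun hle => ?_, fun hle => ?_⟩
        · have := key (c - δ) ⟨hle, by linarith [hc.2]⟩ c hc (by linarith)
          rw [hc0] at this
          have h2 : r * δ ≤ -F' (c - δ) := by linarith [this]; 
          linarith [hrδ]
        · have := key c hc (c + δ) ⟨by linarith [hc.1], hle⟩ (by linarith)
          rw [hc0] at this
          linarith [hrδ]
  set c1 : ℝ := max a (c - δ) with hc1def
  set c2 : ℝ := min b (c + δ) with hc2def
  have h1 : a ≤ c1 := le_max_left _ _
  have h12 : c1 ≤ c2 := by
    apply max_le <;> [skip; skip] <;> apply le_min <;>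
      first | exact hab | linarith [hc.1, hc.2, hδ.le]
  have h2 : c2 ≤ b := min_le_left _ _
  have hc1b : c1 ≤ b := h12.trans h2
  have hac2 : a ≤ c2 := h1.trans h12
  have contv : ContinuousOn (fun x => Complex.exp (I * (F x : ℂ))) (Icc a b) :=
    Complex.continuous_exp.comp_continuousOn
      (continuousOn_const.mul (Complex.continuous_ofReal.comp_continuousOn
        (fun x hx => (hd x hx).continuousAt.continuousWithinAt)))
  have hInt : ∀ u ∈ Icc a b, ∀ v ∈ Icc a b,
      IntervalIntegrable (fun x => Complex.exp (I * (F x : ℂ))) volume u v :=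
    fun u hu v hv => (contv.mono (uIcc_subset_Icc hu hv)).intervalIntegrable
  have m1 : c1 ∈ Icc a b := ⟨h1, hc1b⟩
  have m2 : c2 ∈ Icc a b := ⟨hac2, h2⟩
  have ma : a ∈ Icc a b := left_mem_Icc.2 hab
  have mb : b ∈ Icc a b := right_mem_Icc.2 hab
  have e1 := intervalIntegral.integral_add_adjacent_intervals
    (hInt a ma c1 m1) (hInt c1 m1 c2 m2)
  have e2 := intervalIntegral.integral_add_adjacent_intervals
    (hInt a ma c2 m2) (hInt c2 m2 b mb)
  -- middle bound
  have hmid : ‖∫ x in c1..c2, Complex.exp (I * (F x : ℂ))‖ ≤ 2 * δ := by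
    have := intervalIntegral.norm_integral_le_of_norm_le_const
      (f := fun x => Complex.exp (I * (F x : ℂ))) (a := c1) (b := c2) (C := 1)
      (fun x _ => by
        rw [Complex.norm_exp]
        simp)
    rw [one_mul, _root_.abs_of_nonneg (by linarith : (0:ℝ) ≤ c2 - c1)] at this
    have hlen : c2 - c1 ≤ 2 * δ := by
      have ha1 : c - δ ≤ c1 := le_max_right _ _
      have ha2 : c2 ≤ c + δ := min_le_right _ _
      linarith
    linarith
  -- left bound
  have hleft : ‖∫ x in a..c1, Complex.exp (I * (F x : ℂ))‖ ≤ 3 / Real.sqrt r := by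
    rcases eq_or_lt_of_le h1 with heq | hlt
    · rw [← heq, intervalIntegral.integral_same, norm_zero]
      positivity
    · have hacδ : a < c - δ := by
        by_contra hcon
        push_neg at hcon
        rw [hc1def, max_eq_left hcon] at hlt
        exact lt_irrefl a hlt
      have hc1eq : c1 = c - δ := max_eq_right hacδ.le
      have hsub : Icc a c1 ⊆ Icc a b := Icc_subset_Icc le_rfl hc1b
      apply vdc1 F F' F'' a c1 (Real.sqrt r) h1 hsr
        (fun x hx => hd x (hsub hx)) (fun x hx => hd' x (hsub hx))
        (fun x hx => lt_of_lt_of_le hr (hbd x (hsub hx)))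
      right
      intro x hx
      have hmono := key x (hsub hx) c1 m1 hx.2
      have hend : F' c1 ≤ -Real.sqrt r := by
        rw [hc1eq]; exact hcL hacδ.le
      nlinarith [hx.2, hr.le]
  -- right bound
  have hright : ‖∫ x in c2..b, Complex.exp (I * (F x : ℂ))‖ ≤ 3 / Real.sqrt r := by
    rcases eq_or_lt_of_le h2 with heq | hlt
    · rw [heq, intervalIntegral.integral_same, norm_zero]
      positivity
    · have hbcδ : c + δ < b := by
        by_contra hcon
        push_neg at hcon
        rw [hc2def, min_eq_left hcon] at hlt
        exact lt_irrefl b hlt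
      have hc2eq : c2 = c + δ := min_eq_right hbcδ.le
      have hsub : Icc c2 b ⊆ Icc a b := Icc_subset_Icc hac2 le_rfl
      apply vdc1 F F' F'' c2 b (Real.sqrt r) h2 hsr
        (fun x hx => hd x (hsub hx)) (fun x hx => hd' x (hsub hx))
        (fun x hx => lt_of_lt_of_le hr (hbd x (hsub hx)))
      left
      intro x hx
      have hmono := key c2 m2 x (hsub hx) hx.1
      have hend : Real.sqrt r ≤ F' c2 := by
        rw [hc2eq]; exact hcR hbcδ.le
      nlinarith [hx.1, hr.le]
  calc ‖∫ x in a..b, Complex.exp (I * (F x : ℂ))‖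
      = ‖(∫ x in a..c1, Complex.exp (I * (F x : ℂ)))
          + (∫ x in c1..c2, Complex.exp (I * (F x : ℂ)))
          + (∫ x in c2..b, Complex.exp (I * (F x : ℂ)))‖ := by rw [e1, e2]
    _ ≤ ‖(∫ x in a..c1, Complex.exp (I * (F x : ℂ)))
          + (∫ x in c1..c2, Complex.exp (I * (F x : ℂ)))‖
        + ‖∫ x in c2..b, Complex.exp (I * (F x : ℂ))‖ := norm_add_le _ _
    _ ≤ ‖∫ x in a..c1, Complex.exp (I * (F x : ℂ))‖
        + ‖∫ x in c1..c2, Complex.exp (I * (F x : ℂ))‖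
        + ‖∫ x in c2..b, Complex.exp (I * (F x : ℂ))‖ := by
          gcongr; exact norm_add_le _ _
    _ ≤ 3 / Real.sqrt r + 2 * δ + 3 / Real.sqrt r := by gcongr
    _ = 8 / Real.sqrt r := by
        rw [hδdef]
        field_simp
        ring

/-- second derivative test: if `F` is twice differentiable on `[a,b]`
with `|F''(x)| ≥ r > 0`, then `|∫_a^b e^{iF(x)} dx| ≤ 8/√r`. -/
theorem stmt_15 (F F' F'' : ℝ → ℝ) (a b r : ℝ) (hab : a ≤ b) (hr : 0 < r)
    (hderiv : ∀ x ∈ Set.Icc a b, HasDerivAt F (F' x) x)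
    (hderiv' : ∀ x ∈ Set.Icc a b, HasDerivAt F' (F'' x) x)
    (hbound : ∀ x ∈ Set.Icc a b, r ≤ |F'' x|) :
    ‖∫ x in a..b, Complex.exp (I * (F x : ℂ))‖ ≤ 8 / Real.sqrt r := by
  have hne0 : ∀ x ∈ Set.Icc a b, F'' x ≠ (0 : ℝ) := by
    intro x hx h0
    have := hbound x hx
    rw [h0, abs_zero] at this
    linarith
  have hdich := hasDerivWithinAt_forall_lt_or_forall_gt_of_forall_ne (convex_Icc a b)
    (fun x hx => (hderiv' x hx).hasDerivWithinAt) (m := 0) hne0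
  rcases hdich with hneg | hpos
  · -- F'' < 0 everywhere : apply vdc2 to -F
    have hbd : ∀ x ∈ Set.Icc a b, r ≤ -F'' x := by
      intro x hx
      have h := hbound x hx
      rwa [abs_of_neg (hneg x hx)] at h
    have hmain := vdc2 (fun y => -F y) (fun y => -F' y) (fun y => -F'' y) a b r hab hr
      (fun x hx => (hderiv x hx).neg) (fun x hx => (hderiv' x hx).neg) hbd
    have hconj : (∫ x in a..b, Complex.exp (I * ((-F x : ℝ) : ℂ)))
        = (starRingEnd ℂ) (∫ x in a..b, Complex.exp (I * (F x : ℂ))) := by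
      rw [intervalIntegral.integral_of_le hab, intervalIntegral.integral_of_le hab,
        ← integral_conj]
      apply MeasureTheory.integral_congr_ae
      filter_upwards with x
      rw [← Complex.exp_conj]
      congr 1
      simp [Complex.ext_iff]
    rw [hconj] at hmain
    rwa [RCLike.norm_conj] at hmain
  · have hbd : ∀ x ∈ Set.Icc a b, r ≤ F'' x := by
      intro x hx
      have h := hbound x hx
      rwa [abs_of_pos (hpos x hx)] at h
    exact vdc2 F F' F'' a b r hab hr hderiv hderiv' hbd
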